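/- Let H be a spanning subgraph of a graph G. If H is weighted universal product antimagic, then G is weighted universal product antimagic. -/

import Mathlib

open scoped Classical

noncomputable def edgeFS {V : Type*} [Fintype V] (G : SimpleGraph V) : Finset (Sym2 V) :=
  G.edgeSet.toFinset

noncomputable def vSum {V : Type*} [Fintype V] (G : SimpleGraph V) (φ : Sym2 V → ℝ) (v : V) : ℝ :=
  ∑ e ∈ (edgeFS G).filter (fun e => v ∈ e), φ e

noncomputable def vProd {V : Type*} [Fintype V] (G : SimpleGraph V) (φ : Sym2 V → ℝ) (v : V) : ℝ :=
  ∏ e ∈ (edgeFS G).filter (fun e => v ∈ e), φ e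

/-- Weighted universal product antimagic. -/
def WeightedUnivProdAntimagic {V : Type*} [Fintype V] (G : SimpleGraph V) : Prop :=
  ∀ w : V → ℝ, (∀ v, 1 ≤ w v) →
    ∀ L : Finset ℝ, (∀ x ∈ L, 1 ≤ x) → L.card = (edgeFS G).card →
      ∃ φ : Sym2 V → ℝ, Set.BijOn φ ↑(edgeFS G) ↑L ∧
        Function.Injective (fun v => w v * vProd G φ v)

/-- If a spanning subgraph `H` of `G` is weighted universal product
antimagic, then so is `G`. -/
theorem stmt_6 {V : Type*} [Fintype V] (H G : SimpleGraph V) (hHG : H ≤ G)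
    (hH : WeightedUnivProdAntimagic H) :
    WeightedUnivProdAntimagic G := by
  intro w hw L hL hcard
  have hsub : edgeFS H ⊆ edgeFS G := by
    intro e he
    simp only [edgeFS, Set.mem_toFinset] at *
    exact SimpleGraph.edgeSet_mono hHG he
  obtain ⟨LH, hLHsub, hLHcard⟩ := Finset.exists_subset_card_eq (s := L) (n := (edgeFS H).card)
      (by rw [hcard]; exact Finset.card_le_card hsub)
  set ext : Finset (Sym2 V) := edgeFS G \ edgeFS H with hext
  set LE : Finset ℝ := L \ LH with hLE
  have hcardE : ext.card = LE.card := by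
    simp [hext, hLE, Finset.card_sdiff_of_subset hsub, Finset.card_sdiff_of_subset hLHsub, hcard, hLHcard]
  let eqv := Finset.equivOfCardEq hcardE
  let ψ : Sym2 V → ℝ := fun e => if h : e ∈ ext then (eqv ⟨e, h⟩ : ℝ) else 1
  have hψmem : ∀ e (he : e ∈ ext), ψ e ∈ LE := by
    intro e he
    simp only [ψ, dif_pos he]
    exact (eqv ⟨e, he⟩).2
  set w' : V → ℝ := fun v => w v * ∏ e ∈ ext.filter (fun e => v ∈ e), ψ e with hw'def
  have hw' : ∀ v, 1 ≤ w' v := by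
    intro v
    have h1 : (1 : ℝ) ≤ ∏ e ∈ ext.filter (fun e => v ∈ e), ψ e := by
      calc (1 : ℝ) = ∏ _e ∈ ext.filter (fun e => v ∈ e), (1 : ℝ) := by
            rw [Finset.prod_const_one]
        _ ≤ ∏ e ∈ ext.filter (fun e => v ∈ e), ψ e := by
            apply Finset.prod_le_prod (fun _ _ => zero_le_one)
            intro e he
            have := hψmem e (Finset.mem_of_mem_filter e he)
            exact hL _ (Finset.mem_sdiff.mp this).1
    have h2 := hw v
    simp only [hw'def]
    nlinarith
  obtain ⟨φH, bijH, injH⟩ := hH w' hw' LH (fun x hx => hL x (hLHsub hx)) hLHcard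
  set φ : Sym2 V → ℝ := fun e => if e ∈ edgeFS H then φH e else ψ e with hφdef
  have hunion : edgeFS H ∪ ext = edgeFS G := Finset.union_sdiff_of_subset hsub
  have hdisj : Disjoint (edgeFS H) ext := Finset.disjoint_sdiff
  refine ⟨φ, ⟨?_, ?_, ?_⟩, ?_⟩
  · -- MapsTo
    intro e he
    simp only [Finset.coe_sdiff, Finset.mem_coe] at he ⊢
    by_cases h : e ∈ edgeFS H
    · simp only [hφdef, if_pos h]
      exact hLHsub (bijH.mapsTo (by simpa using h))
    · have he' : e ∈ ext := Finset.mem_sdiff.mpr ⟨he, h⟩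
      simp only [hφdef, if_neg h]
      exact (Finset.mem_sdiff.mp (hψmem e he')).1
  · -- InjOn
    intro e1 he1 e2 he2 heq
    simp only [Finset.mem_coe] at he1 he2
    by_cases h1 : e1 ∈ edgeFS H <;> by_cases h2 : e2 ∈ edgeFS H
    · exact bijH.injOn (by simpa using h1) (by simpa using h2)
        (by simpa only [hφdef, if_pos h1, if_pos h2] using heq)
    · exfalso
      have m1 : φ e1 ∈ LH := by
        simp only [hφdef, if_pos h1]; exact bijH.mapsTo (by simpa using h1)
      have m2 : φ e2 ∈ LE := by
        simp only [hφdef, if_neg h2]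
        exact hψmem e2 (Finset.mem_sdiff.mpr ⟨he2, h2⟩)
      rw [heq] at m1
      exact (Finset.mem_sdiff.mp m2).2 m1
    · exfalso
      have m2 : φ e2 ∈ LH := by
        simp only [hφdef, if_pos h2]; exact bijH.mapsTo (by simpa using h2)
      have m1 : φ e1 ∈ LE := by
        simp only [hφdef, if_neg h1]
        exact hψmem e1 (Finset.mem_sdiff.mpr ⟨he1, h1⟩)
      rw [heq] at m1
      exact (Finset.mem_sdiff.mp m1).2 m2
    · have he1' : e1 ∈ ext := Finset.mem_sdiff.mpr ⟨he1, h1⟩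
      have he2' : e2 ∈ ext := Finset.mem_sdiff.mpr ⟨he2, h2⟩
      have : (eqv ⟨e1, he1'⟩ : ℝ) = (eqv ⟨e2, he2'⟩ : ℝ) := by
        simpa only [hφdef, if_neg h1, if_neg h2, ψ, dif_pos he1', dif_pos he2'] using heq
      have := eqv.injective (Subtype.ext this)
      exact congrArg Subtype.val this
  · -- SurjOn
    intro x hx
    simp only [Finset.mem_coe] at hx
    by_cases h : x ∈ LH
    · obtain ⟨e, he, heq⟩ := bijH.surjOn (by simpa using h)
      simp only [Finset.mem_coe] at he
      exact ⟨e, by simpa using hsub he, by simp only [hφdef, if_pos he]; exact heq⟩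
    · have hx' : x ∈ LE := Finset.mem_sdiff.mpr ⟨hx, h⟩
      set p := eqv.symm ⟨x, hx'⟩ with hp
      have heH : (p : Sym2 V) ∉ edgeFS H := (Finset.mem_sdiff.mp p.2).2
      refine ⟨(p : Sym2 V), ?_, ?_⟩
      · simpa using (Finset.mem_sdiff.mp p.2).1
      · simp only [hφdef, if_neg heH, ψ, dif_pos p.2]
        have : eqv ⟨(p : Sym2 V), p.2⟩ = eqv p := rfl
        rw [this, hp, Equiv.apply_symm_apply]
  · have key : (fun v => w v * vProd G φ v) = fun v => w' v * vProd H φH v := by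
      funext v
      have hfil : (edgeFS G).filter (fun e => v ∈ e)
          = (edgeFS H).filter (fun e => v ∈ e) ∪ ext.filter (fun e => v ∈ e) := by
        rw [← Finset.filter_union, hunion]
      have hdisj' : Disjoint ((edgeFS H).filter (fun e => v ∈ e))
          (ext.filter (fun e => v ∈ e)) :=
        hdisj.mono (Finset.filter_subset _ _) (Finset.filter_subset _ _)
      have h1 : ∏ e ∈ (edgeFS H).filter (fun e => v ∈ e), φ e
          = ∏ e ∈ (edgeFS H).filter (fun e => v ∈ e), φH e := by
        apply Finset.prod_congr rfl
        intro e he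
        simp only [hφdef, if_pos (Finset.mem_of_mem_filter e he)]
      have h2 : ∏ e ∈ ext.filter (fun e => v ∈ e), φ e
          = ∏ e ∈ ext.filter (fun e => v ∈ e), ψ e := by
        apply Finset.prod_congr rfl
        intro e he
        have hm := Finset.mem_of_mem_filter e he
        simp only [hφdef, if_neg (Finset.mem_sdiff.mp hm).2]
      simp only [vProd, hfil, Finset.prod_union hdisj', h1, h2, hw'def]
      ring
    rw [key]
    exact injH
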